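/- Let t be a sh̄-normal term. (1) Uniqueness: if π is a derivation of ⊢ t : 0 (empty environment, empty type) and π' is a derivation of Γ ⊢ t : 0, then t is a value, |π| = 0, dom(Γ) = ∅ and π = π'. (2) Characterization: for any suitable list x⃗ = (x_1,…,x_k) of variables for t, the following are equivalent: t is a value; ((0,…,0), 0) ∈ ⟦t⟧_x⃗; there is a derivation of ⊢ t : 0; there is a derivation π typing t with |π| = 0. -/
import Mathlib


/-! Terms of the shuffling calculus λ_sh. -/

inductive Term : Type
  | var : ℕ → Term
  | lam : ℕ → Term → Term
  | app : Term → Term → Term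
deriving DecidableEq

namespace Term

/-- Values: variables and abstractions. -/
inductive IsValue : Term → Prop
  | var (x : ℕ) : IsValue (var x)
  | lam (x : ℕ) (t : Term) : IsValue (lam x t)

/-- Free variables. -/
def fv : Term → Finset ℕ
  | var x => {x}
  | lam x t => fv t \ {x}
  | app t u => fv t ∪ fv u

/-- Substitution of `v` for the free occurrences of `x` in a term. -/
def subst : Term → ℕ → Term → Term
  | var y, x, v => if y = x then v else var y
  | lam y t, x, v => if y = x then lam y t else lam y (subst t x v)
  | app t u, x, v => app (subst t x v) (subst u x v)

end Term

open Term

/-- The β_v root step: (λx.t)v ↦ t{v/x} for v a value. -/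
inductive RootBeta : Term → Term → Prop
  | red (x : ℕ) (t v : Term) : IsValue v →
      RootBeta (.app (.lam x t) v) (t.subst x v)

/-- The σ1 root step: ((λx.t)u)s ↦ ((λx.t s))u with x ∉ FV(s). -/
inductive RootSigma1 : Term → Term → Prop
  | red (x : ℕ) (t u s : Term) : x ∉ s.fv →
      RootSigma1 (.app (.app (.lam x t) u) s) (.app (.lam x (.app t s)) u)

/-- The σ3 root step: v((λx.s)u) ↦ ((λx.v s))u for v a value with x ∉ FV(v). -/
inductive RootSigma3 : Term → Term → Prop
  | red (x : ℕ) (v s u : Term) : IsValue v → x ∉ v.fv →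
      RootSigma3 (.app v (.app (.lam x s) u)) (.app (.lam x (.app v s)) u)

/-- σ = σ1 ∪ σ3. -/
def RootSigma (t u : Term) : Prop := RootSigma1 t u ∨ RootSigma3 t u

/-- sh = β_v ∪ σ. -/
def RootSh (t u : Term) : Prop := RootBeta t u ∨ RootSigma t u

/-- Closure of a root step under arbitrary one-hole contexts
    C ::= ⟨·⟩ | λx.C | C t | t C. -/
inductive FStep (r : Term → Term → Prop) : Term → Term → Prop
  | root {t t'} : r t t' → FStep r t t'
  | lam {t t'} (x : ℕ) : FStep r t t' → FStep r (.lam x t) (.lam x t')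
  | appL {t t'} (u : Term) : FStep r t t' → FStep r (.app t u) (.app t' u)
  | appR {u u'} (t : Term) : FStep r u u' → FStep r (.app t u) (.app t u')

/-- Closure of a root step under balanced contexts
    B ::= ⟨·⟩ | (λx.B)t | B t | t B. -/
inductive BStep (r : Term → Term → Prop) : Term → Term → Prop
  | root {t t'} : r t t' → BStep r t t'
  | lamApp {t t'} (x : ℕ) (u : Term) : BStep r t t' →
      BStep r (.app (.lam x t) u) (.app (.lam x t') u)
  | appL {t t'} (u : Term) : BStep r t t' → BStep r (.app t u) (.app t' u)
  | appR {u u'} (t : Term) : BStep r u u' → BStep r (.app t u) (.app t u')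

/-- `t` is normal for the reduction `r`. -/
def NormalFor (r : Term → Term → Prop) (t : Term) : Prop := ∀ u, ¬ r t u

/-- `t` is `r`-normalizable. -/
def Normalizable (r : Term → Term → Prop) (t : Term) : Prop :=
  ∃ u, Relation.ReflTransGen r t u ∧ NormalFor r u

/-- `t` is strongly `r`-normalizable: no infinite `r`-sequence from `t`. -/
def StronglyNormalizable (r : Term → Term → Prop) (t : Term) : Prop :=
  Acc (fun a b => r b a) t

/-- Confluence of a reduction. -/
def Confluent (r : Term → Term → Prop) : Prop :=
  ∀ a b c, Relation.ReflTransGen r a b → Relation.ReflTransGen r a c →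
    ∃ d, Relation.ReflTransGen r b d ∧ Relation.ReflTransGen r c d

/-- Strong normalization of a reduction. -/
def StronglyNormalizing (r : Term → Term → Prop) : Prop :=
  WellFounded (fun a b => r b a)

/-! The sets Λ_a and Λ_n: a ::= x v | x a | a n and n ::= v | a | (λx.n)a. -/

mutual
  inductive LamA : Term → Prop
    | varVal (x : ℕ) (v : Term) : IsValue v → LamA (.app (.var x) v)
    | varA (x : ℕ) (a : Term) : LamA a → LamA (.app (.var x) a)
    | appAN (a n : Term) : LamA a → LamN n → LamA (.app a n)
  inductive LamN : Term → Prop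
    | val (v : Term) : IsValue v → LamN v
    | ofA (a : Term) : LamA a → LamN a
    | redex (x : ℕ) (n a : Term) : LamN n → LamA a → LamN (.app (.lam x n) a)
end

/-! Positive types: finite multisets (represented as lists) of pairs of
    positive types. -/

inductive PType : Type
  | node : List (PType × PType) → PType

namespace PType

/-- The empty positive type 0. -/
def zero : PType := node []

/-- Multiset union of positive types. -/
def union : PType → PType → PType
  | node l, node l' => node (l ++ l')

/-- Union of a list of positive types. -/
def listUnion (l : List PType) : PType := l.foldr union zero

end PType

/-- Type environments: maps from variables to positive types. -/
def Env : Type := ℕ → PType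

namespace Env

/-- The empty environment. -/
def zero : Env := fun _ => PType.zero

/-- The environment x : P. -/
def single (x : ℕ) (P : PType) : Env := fun y => if y = x then P else PType.zero

/-- Pointwise multiset union of environments. -/
def union (Γ Δ : Env) : Env := fun y => (Γ y).union (Δ y)

/-- `Γ, x : P` : reassign `x` to `P` in `Γ`. -/
def update (Γ : Env) (x : ℕ) (P : PType) : Env := fun y => if y = x then P else Γ y

/-- Union of a list of environments. -/
def listUnion (l : List Env) : Env := fun y => PType.listUnion (l.map (fun Γ => Γ y))

/-- Domain of an environment. -/
def dom (Γ : Env) : Set ℕ := {x | Γ x ≠ PType.zero}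

end Env

/-! Type derivations of the non-idempotent intersection type system.
    The n-ary λ-rule is presented via the two constructors `lamNil`
    (no premises) and `lamCons` (one more premise). -/

inductive Deriv : Env → Term → PType → Type
  | ax (x : ℕ) (P : PType) : Deriv (Env.single x P) (.var x) P
  | lamNil (x : ℕ) (t : Term) : Deriv Env.zero (.lam x t) PType.zero
  | lamCons {Γ Δ : Env} {x : ℕ} {t : Term} {P Q : PType} {L : List (PType × PType)} :
      Deriv (Γ.update x P) t Q → Deriv Δ (.lam x t) (.node L) →
      Deriv ((Γ.update x PType.zero).union Δ) (.lam x t) (.node ((P, Q) :: L))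
  | app {Γ Δ : Env} {t u : Term} {P Q : PType} :
      Deriv Γ t (.node [(P, Q)]) → Deriv Δ u P →
      Deriv (Γ.union Δ) (.app t u) Q

/-- The size of a derivation: its number of @-rules. -/
def Deriv.size {Γ : Env} {t : Term} {P : PType} : Deriv Γ t P → ℕ
  | .ax _ _ => 0
  | .lamNil _ _ => 0
  | .lamCons d₁ d₂ => d₁.size + d₂.size
  | .app d₁ d₂ => d₁.size + d₂.size + 1

/-- The environment x_1 : P_1, …, x_k : P_k. -/
def envOfLists : List ℕ → List PType → Env
  | x :: xs, P :: Ps => (Env.single x P).union (envOfLists xs Ps)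
  | _, _ => Env.zero

/-- A list of (pairwise distinct) variables suitable for `t`. -/
def Suitable (xs : List ℕ) (t : Term) : Prop :=
  xs.Nodup ∧ ∀ x ∈ t.fv, x ∈ xs

/-- Relational semantics of `t` with respect to the list of variables `xs`. -/
def sem (xs : List ℕ) (t : Term) : Set (List PType × PType) :=
  { p | p.1.length = xs.length ∧ Nonempty (Deriv (envOfLists xs p.1) t p.2) }

/-- The set of sizes of typing derivations for `t`. -/
def derivSizes (t : Term) : Set ℕ :=
  { n | ∃ (Γ : Env) (Q : PType) (π : Deriv Γ t Q), π.size = n }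

/-- The size ⌊t⌋ of a sh̄-normal term. -/
def nsize : Term → ℕ
  | .var _ => 0
  | .lam _ _ => 0
  | .app (.lam _ n) u => nsize n + nsize u + 1
  | .app t u => nsize t + nsize u + 1

/-- sh̄-reduction sequences from `t` to `u` with exactly `k` β_v-steps. -/
inductive ShSeq : Term → Term → ℕ → Prop
  | refl (t : Term) : ShSeq t t 0
  | beta {t t' u : Term} {k : ℕ} : BStep RootBeta t t' → ShSeq t' u k →
      ShSeq t u (k + 1)
  | sigma {t t' u : Term} {k : ℕ} : BStep RootSigma t t' → ShSeq t' u k →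
      ShSeq t u k

/-! Auxiliary lemmas. -/

private lemma union_zero {P Q : PType} (h : P.union Q = PType.zero) :
    P = PType.zero ∧ Q = PType.zero := by
  cases P with | node l => cases Q with | node l' =>
  simp only [PType.union, PType.zero, PType.node.injEq, List.append_eq_nil_iff] at h
  exact ⟨by simp [PType.zero, h.1], by simp [PType.zero, h.2]⟩

private lemma env_union_zero {Γ Δ : Env} (h : ∀ y, (Γ.union Δ) y = PType.zero) :
    (∀ y, Γ y = PType.zero) ∧ (∀ y, Δ y = PType.zero) :=
  ⟨fun y => (union_zero (h y)).1, fun y => (union_zero (h y)).2⟩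

private lemma normal_app_left {t u : Term}
    (h : NormalFor (BStep RootSh) (.app t u)) : NormalFor (BStep RootSh) t :=
  fun t' ht' => h _ (BStep.appL u ht')

private lemma normal_app_right {t u : Term}
    (h : NormalFor (BStep RootSh) (.app t u)) : NormalFor (BStep RootSh) u :=
  fun u' hu' => h _ (BStep.appR t hu')

/-- Transport a derivation along a pointwise equality of environments. -/
def Deriv.castEnv {Γ Γ' : Env} {t : Term} {P : PType}
    (h : ∀ y, Γ y = Γ' y) (d : Deriv Γ t P) : Deriv Γ' t P :=
  (funext h : Γ = Γ') ▸ d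

private lemma var_inv {Γ : Env} {x : ℕ} {P : PType} (d : Deriv Γ (.var x) P) :
    Γ = Env.single x P ∧ HEq d (Deriv.ax x P) := by
  cases d; exact ⟨rfl, HEq.rfl⟩

private lemma lam_nil_inv {Γ : Env} {x : ℕ} {b : Term}
    (d : Deriv Γ (.lam x b) (PType.node [])) :
    Γ = Env.zero ∧ HEq d (Deriv.lamNil x b) := by
  cases d; exact ⟨rfl, HEq.rfl⟩

private lemma size_var {Γ : Env} {x : ℕ} {P : PType} (d : Deriv Γ (.var x) P) :
    d.size = 0 := by cases d; rfl

private lemma size_lam_nil {Γ : Env} {x : ℕ} {b : Term}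
    (d : Deriv Γ (.lam x b) (PType.node [])) : d.size = 0 := by cases d; rfl

private lemma app_size_ne {Γ : Env} {t u : Term} {Q : PType}
    (d : Deriv Γ (.app t u) Q) : d.size ≠ 0 := by
  cases d with | app d₁ d₂ => simp [Deriv.size]

private lemma dom_single_zero (x : ℕ) :
    Env.dom (Env.single x PType.zero) = ∅ := by
  apply Set.eq_empty_iff_forall_notMem.mpr
  intro y hy
  exact hy (by unfold Env.single; split <;> rfl)

private lemma dom_zero : Env.dom Env.zero = ∅ := by
  apply Set.eq_empty_iff_forall_notMem.mpr
  intro y hy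
  exact hy rfl

private lemma envOfLists_replicate :
    ∀ (xs : List ℕ) (y : ℕ),
      envOfLists xs (List.replicate xs.length PType.zero) y = PType.zero
  | [], _ => rfl
  | x :: xs, y => by
    show ((Env.single x PType.zero).union
      (envOfLists xs (List.replicate xs.length PType.zero))) y = PType.zero
    show PType.union (Env.single x PType.zero y)
      (envOfLists xs (List.replicate xs.length PType.zero) y) = PType.zero
    rw [envOfLists_replicate xs y]
    unfold Env.single; split <;> rfl

/-- A sh̄-normal term typable in an (pointwise) empty environment is a value. -/
private lemma value_of_zero_env :
    ∀ {Γ : Env} {t : Term} {Q : PType}, Deriv Γ t Q →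
      (∀ y, Γ y = PType.zero) → NormalFor (BStep RootSh) t → t.IsValue := by
  intro Γ t Q d
  induction d with
  | ax x P => exact fun _ _ => .var x
  | lamNil x b => exact fun _ _ => .lam x b
  | lamCons _ _ _ _ => exact fun _ _ => .lam _ _
  | @app Γ₁ Γ₂ t₁ u P Q d₁ d₂ ih₁ ih₂ =>
    intro hz hnf
    obtain ⟨h₁, h₂⟩ := env_union_zero hz
    have hv₁ := ih₁ h₁ (normal_app_left hnf)
    have hv₂ := ih₂ h₂ (normal_app_right hnf)
    exfalso
    cases hv₁ with
    | var x =>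
      have hΓ := (var_inv d₁).1
      have := h₁ x
      rw [hΓ] at this
      simp [Env.single, PType.zero] at this
    | lam x b =>
      exact hnf _ (BStep.root (Or.inl (RootBeta.red x b _ hv₂)))

/-- uniqueness of the derivation with empty types and
    logical/semantic characterization of values among sh̄-normal forms. -/
theorem empty_type_derivation_unique_and_value_characterization (t : Term)
    (hnf : NormalFor (BStep RootSh) t) :
    (∀ (Γ : Env) (π : Deriv Env.zero t PType.zero)
        (π' : Deriv Γ t PType.zero),
      Term.IsValue t ∧ π.size = 0 ∧ Env.dom Γ = ∅ ∧ HEq π π') ∧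
    (∀ xs : List ℕ, Suitable xs t →
      [ Term.IsValue t,
        (List.replicate xs.length PType.zero, PType.zero) ∈ sem xs t,
        Nonempty (Deriv Env.zero t PType.zero),
        ∃ (Γ : Env) (Q : PType) (π : Deriv Γ t Q), π.size = 0 ].TFAE) := by
  constructor
  · intro Γ π π'
    have hv : t.IsValue := value_of_zero_env π (fun _ => rfl) hnf
    cases hv with
    | var x =>
      obtain ⟨hΓ2, hπ'⟩ := var_inv π'
      refine ⟨.var x, size_var π, ?_, (var_inv π).2.trans hπ'.symm⟩
      rw [hΓ2]; exact dom_single_zero x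
    | lam x b =>
      obtain ⟨hΓ2, hπ'⟩ := lam_nil_inv π'
      refine ⟨.lam x b, size_lam_nil π, ?_, (lam_nil_inv π).2.trans hπ'.symm⟩
      rw [hΓ2]; exact dom_zero
  · intro xs _
    tfae_have 1 → 3
    · rintro (⟨x⟩ | ⟨x, b⟩)
      · exact ⟨(Deriv.ax x PType.zero).castEnv
          (fun y => by unfold Env.single; split <;> rfl)⟩
      · exact ⟨Deriv.lamNil x b⟩
    tfae_have 3 → 2
    · rintro ⟨d⟩
      exact ⟨by simp, ⟨d.castEnv (fun y => (envOfLists_replicate xs y).symm)⟩⟩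
    tfae_have 2 → 3
    · rintro ⟨-, ⟨d⟩⟩
      exact ⟨d.castEnv (fun y => envOfLists_replicate xs y)⟩
    tfae_have 3 → 1
    · rintro ⟨d⟩
      exact value_of_zero_env d (fun _ => rfl) hnf
    tfae_have 1 → 4
    · rintro (⟨x⟩ | ⟨x, b⟩)
      · exact ⟨_, _, Deriv.ax x PType.zero, rfl⟩
      · exact ⟨_, _, Deriv.lamNil x b, rfl⟩
    tfae_have 4 → 1
    · rintro ⟨Γ, Q, π, hs⟩
      cases t with
      | var x => exact .var x
      | lam x b => exact .lam x b
      | app t u => exact absurd hs (app_size_ne π)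
    tfae_finish
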